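/- arXiv:2409.00132 — 2 statements merged into one kernel-verified Lean document; each statement's English description precedes it below -/
import Mathlib

section
/- Let b₁, b₂, b₃ be nonzero real constants and define φ : ℝ² → ℝ⁶ by φ(u,v) = (−b₁u, √(b₁²+1)/√(b₁²+2) · cos(√(b₁²+2) u), √(b₁²+1)/√(b₁²+2) · sin(√(b₁²+2) u), b₂, b₃ sin(v/b₃), b₃ cos(v/b₃)). Then with respect to the Lorentzian inner product ⟨x,y⟩ = −x₁y₁ + Σ_{i=2}^{6} xᵢyᵢ on ℝ⁶, the partial derivatives satisfy ⟨∂φ/∂u, ∂φ/∂u⟩ = 1, ⟨∂φ/∂v, ∂φ/∂v⟩ = 1 and ⟨∂φ/∂u, ∂φ/∂v⟩ = 0 at all points; in particular φ is a space-like isometric immersion. -/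
open Real

/-- The Lorentzian (Minkowski) inner product `⟨x,y⟩ = -x₁y₁ + ∑_{i=2}^{6} xᵢyᵢ` on `ℝ⁶`. -/
noncomputable def lorentz6 (x y : Fin 6 → ℝ) : ℝ :=
  -(x 0 * y 0) + x 1 * y 1 + x 2 * y 2 + x 3 * y 3 + x 4 * y 4 + x 5 * y 5

/-- The surface of Theorem 6.1 in `𝔼¹₁ × S⁴ ⊂ ℝ⁶`. -/
noncomputable def phiRS (b₁ b₂ b₃ : ℝ) (u v : ℝ) : Fin 6 → ℝ :=
  ![-b₁ * u,
    (Real.sqrt (b₁ ^ 2 + 1) / Real.sqrt (b₁ ^ 2 + 2)) * Real.cos (Real.sqrt (b₁ ^ 2 + 2) * u),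
    (Real.sqrt (b₁ ^ 2 + 1) / Real.sqrt (b₁ ^ 2 + 2)) * Real.sin (Real.sqrt (b₁ ^ 2 + 2) * u),
    b₂,
    b₃ * Real.sin (v / b₃),
    b₃ * Real.cos (v / b₃)]

/-- The partial derivatives of `φ` form a Lorentz-orthonormal space-like frame:
`⟨φ_u,φ_u⟩ = 1`, `⟨φ_v,φ_v⟩ = 1`, `⟨φ_u,φ_v⟩ = 0`; in particular `φ` is a
space-like isometric immersion. -/
theorem phiRS_spacelike_isometric_immersion (b₁ b₂ b₃ : ℝ)
    (hb₁ : b₁ ≠ 0) (hb₂ : b₂ ≠ 0) (hb₃ : b₃ ≠ 0) :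
    ∀ u v : ℝ,
      lorentz6 (fun i => deriv (fun u' => phiRS b₁ b₂ b₃ u' v i) u)
        (fun i => deriv (fun u' => phiRS b₁ b₂ b₃ u' v i) u) = 1 ∧
      lorentz6 (fun i => deriv (fun v' => phiRS b₁ b₂ b₃ u v' i) v)
        (fun i => deriv (fun v' => phiRS b₁ b₂ b₃ u v' i) v) = 1 ∧
      lorentz6 (fun i => deriv (fun u' => phiRS b₁ b₂ b₃ u' v i) u)
        (fun i => deriv (fun v' => phiRS b₁ b₂ b₃ u v' i) v) = 0 := by
  intro u v
  have h1 : (0:ℝ) ≤ b₁ ^ 2 + 1 := by positivity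
  have h2 : (0:ℝ) ≤ b₁ ^ 2 + 2 := by positivity
  have hs2 : Real.sqrt (b₁ ^ 2 + 2) ≠ 0 := by positivity
  have hlin : HasDerivAt (fun u' : ℝ => Real.sqrt (b₁ ^ 2 + 2) * u')
      (Real.sqrt (b₁ ^ 2 + 2)) u := by
    simpa using (hasDerivAt_id u).const_mul (Real.sqrt (b₁ ^ 2 + 2))
  have hd0 : deriv (fun u' : ℝ => -b₁ * u') u = -b₁ := by
    simpa using ((hasDerivAt_id u).const_mul (-b₁)).deriv
  have hd1 : deriv (fun u' : ℝ =>
      (Real.sqrt (b₁ ^ 2 + 1) / Real.sqrt (b₁ ^ 2 + 2)) *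
        Real.cos (Real.sqrt (b₁ ^ 2 + 2) * u')) u
      = -(Real.sqrt (b₁ ^ 2 + 1) * Real.sin (Real.sqrt (b₁ ^ 2 + 2) * u)) := by
    rw [(hlin.cos.const_mul (Real.sqrt (b₁ ^ 2 + 1) / Real.sqrt (b₁ ^ 2 + 2))).deriv]
    field_simp
  have hd2 : deriv (fun u' : ℝ =>
      (Real.sqrt (b₁ ^ 2 + 1) / Real.sqrt (b₁ ^ 2 + 2)) *
        Real.sin (Real.sqrt (b₁ ^ 2 + 2) * u')) u
      = Real.sqrt (b₁ ^ 2 + 1) * Real.cos (Real.sqrt (b₁ ^ 2 + 2) * u) := by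
    rw [(hlin.sin.const_mul (Real.sqrt (b₁ ^ 2 + 1) / Real.sqrt (b₁ ^ 2 + 2))).deriv]
    field_simp
  have hvlin : HasDerivAt (fun v' : ℝ => v' / b₃) (1 / b₃) v := by
    simpa using (hasDerivAt_id v).div_const b₃
  have hd4 : deriv (fun v' : ℝ => b₃ * Real.sin (v' / b₃)) v = Real.cos (v / b₃) := by
    rw [(hvlin.sin.const_mul b₃).deriv]
    field_simp
  have hd5 : deriv (fun v' : ℝ => b₃ * Real.cos (v' / b₃)) v = -Real.sin (v / b₃) := by
    rw [(hvlin.cos.const_mul b₃).deriv]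
    field_simp
  have hpyth1 := Real.sin_sq_add_cos_sq (Real.sqrt (b₁ ^ 2 + 2) * u)
  have hpyth2 := Real.sin_sq_add_cos_sq (v / b₃)
  have hsq1 := Real.sq_sqrt h1
  have e0u : (fun u' => phiRS b₁ b₂ b₃ u' v 0) = (fun u' : ℝ => -b₁ * u') := rfl
  have e1u : (fun u' => phiRS b₁ b₂ b₃ u' v 1) = (fun u' : ℝ =>
      (Real.sqrt (b₁ ^ 2 + 1) / Real.sqrt (b₁ ^ 2 + 2)) *
        Real.cos (Real.sqrt (b₁ ^ 2 + 2) * u')) := rfl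
  have e2u : (fun u' => phiRS b₁ b₂ b₃ u' v 2) = (fun u' : ℝ =>
      (Real.sqrt (b₁ ^ 2 + 1) / Real.sqrt (b₁ ^ 2 + 2)) *
        Real.sin (Real.sqrt (b₁ ^ 2 + 2) * u')) := rfl
  have e3u : (fun u' => phiRS b₁ b₂ b₃ u' v 3) = (fun _ : ℝ => b₂) := rfl
  have e4u : (fun u' => phiRS b₁ b₂ b₃ u' v 4) = (fun _ : ℝ => b₃ * Real.sin (v / b₃)) := rfl
  have e5u : (fun u' => phiRS b₁ b₂ b₃ u' v 5) = (fun _ : ℝ => b₃ * Real.cos (v / b₃)) := rfl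
  have e0v : (fun v' => phiRS b₁ b₂ b₃ u v' 0) = (fun _ : ℝ => -b₁ * u) := rfl
  have e1v : (fun v' => phiRS b₁ b₂ b₃ u v' 1) = (fun _ : ℝ =>
      (Real.sqrt (b₁ ^ 2 + 1) / Real.sqrt (b₁ ^ 2 + 2)) *
        Real.cos (Real.sqrt (b₁ ^ 2 + 2) * u)) := rfl
  have e2v : (fun v' => phiRS b₁ b₂ b₃ u v' 2) = (fun _ : ℝ =>
      (Real.sqrt (b₁ ^ 2 + 1) / Real.sqrt (b₁ ^ 2 + 2)) *
        Real.sin (Real.sqrt (b₁ ^ 2 + 2) * u)) := rfl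
  have e3v : (fun v' => phiRS b₁ b₂ b₃ u v' 3) = (fun _ : ℝ => b₂) := rfl
  have e4v : (fun v' => phiRS b₁ b₂ b₃ u v' 4) = (fun v' : ℝ => b₃ * Real.sin (v' / b₃)) := rfl
  have e5v : (fun v' => phiRS b₁ b₂ b₃ u v' 5) = (fun v' : ℝ => b₃ * Real.cos (v' / b₃)) := rfl
  refine ⟨?_, ?_, ?_⟩ <;>
  · simp only [lorentz6, e0u, e1u, e2u, e3u, e4u, e5u, e0v, e1v, e2v, e3v, e4v, e5v,
      hd0, hd1, hd2, hd4, hd5, deriv_const]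
    nlinarith [hpyth1, hpyth2, hsq1]
end

section
/- Let b₁, b₂, b₃ be nonzero real constants and define φ : ℝ² → ℝ⁶ by φ(u,v) = (−b₁u, √(b₁²+1)/√(b₁²+2) · cos(√(b₁²+2) u), √(b₁²+1)/√(b₁²+2) · sin(√(b₁²+2) u), b₂, b₃ sin(v/b₃), b₃ cos(v/b₃)). Then: (i) the mixed partial derivative ∂²φ/∂u∂v vanishes identically; (ii) the vector Δφ := ∂²φ/∂u² + ∂²φ/∂v² satisfies ⟨Δφ, ∂φ/∂u⟩ = 0 and ⟨Δφ, ∂φ/∂v⟩ = 0 at every point, where ⟨x,y⟩ = −x₁y₁ + Σ_{i=2}^{6} xᵢyᵢ; and (iii) the first component of Δφ is identically zero, i.e. ⟨Δφ, ∂/∂t⟩ = 0 where ∂/∂t = (1,0,0,0,0,0). -/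
open Real

/-- The Laplacian `Δφ = φ_uu + φ_vv` of the surface `φ`. -/
noncomputable def lapPhiRS (b₁ b₂ b₃ : ℝ) (u v : ℝ) : Fin 6 → ℝ := fun i =>
  deriv (fun u' => deriv (fun u'' => phiRS b₁ b₂ b₃ u'' v i) u') u +
    deriv (fun v' => deriv (fun v'' => phiRS b₁ b₂ b₃ u v'' i) v') v

/-- Derivative of `x ↦ c cos (s x)`. -/
lemma deriv_cos_lin (c s : ℝ) :
    (deriv fun x : ℝ => c * Real.cos (s * x)) = fun x => -(c * s) * Real.sin (s * x) := by
  funext x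
  have h : HasDerivAt (fun x : ℝ => c * Real.cos (s * x)) (-(c * s) * Real.sin (s * x)) x := by
    have h1 : HasDerivAt (fun x : ℝ => c * Real.cos (s * x)) (c * (-Real.sin (s * x) * (s * 1))) x :=
      ((Real.hasDerivAt_cos (s * x)).comp x ((hasDerivAt_id x).const_mul s)).const_mul c
    convert h1 using 1; ring
  exact h.deriv

/-- Derivative of `x ↦ c sin (s x)`. -/
lemma deriv_sin_lin (c s : ℝ) :
    (deriv fun x : ℝ => c * Real.sin (s * x)) = fun x => (c * s) * Real.cos (s * x) := by
  funext x
  have h : HasDerivAt (fun x : ℝ => c * Real.sin (s * x)) ((c * s) * Real.cos (s * x)) x := by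
    have h1 : HasDerivAt (fun x : ℝ => c * Real.sin (s * x)) (c * (Real.cos (s * x) * (s * 1))) x :=
      ((Real.hasDerivAt_sin (s * x)).comp x ((hasDerivAt_id x).const_mul s)).const_mul c
    convert h1 using 1; ring
  exact h.deriv

/-- Derivative of `x ↦ a x`. -/
lemma deriv_lin (a : ℝ) : (deriv fun x : ℝ => a * x) = fun _ => a := by
  funext x
  simpa using ((hasDerivAt_id x).const_mul a).deriv

/-- (i) the mixed partial `φ_uv` vanishes; (ii) `Δφ` is normal to the surface;
(iii) the first component of `Δφ` vanishes, i.e. `⟨Δφ, ∂/∂t⟩ = 0`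
(the biconservativity condition `⟨H,η⟩ = 0`). -/
theorem phiRS_biconservative (b₁ b₂ b₃ : ℝ)
    (hb₁ : b₁ ≠ 0) (hb₂ : b₂ ≠ 0) (hb₃ : b₃ ≠ 0) :
    ∀ u v : ℝ,
      (∀ i : Fin 6, deriv (fun u' => deriv (fun v' => phiRS b₁ b₂ b₃ u' v' i) v) u = 0) ∧
      lorentz6 (lapPhiRS b₁ b₂ b₃ u v)
        (fun i => deriv (fun u' => phiRS b₁ b₂ b₃ u' v i) u) = 0 ∧
      lorentz6 (lapPhiRS b₁ b₂ b₃ u v)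
        (fun i => deriv (fun v' => phiRS b₁ b₂ b₃ u v' i) v) = 0 ∧
      lapPhiRS b₁ b₂ b₃ u v 0 = 0 := by
  intro u v
  set S := Real.sqrt (b₁ ^ 2 + 2) with hS
  set C := Real.sqrt (b₁ ^ 2 + 1) / Real.sqrt (b₁ ^ 2 + 2) with hC
  -- components as functions of u (v fixed at any w)
  have e0 : ∀ w : ℝ, (fun x : ℝ => phiRS b₁ b₂ b₃ x w 0) = fun x => -b₁ * x := fun _ => rfl
  have e1 : ∀ w : ℝ, (fun x : ℝ => phiRS b₁ b₂ b₃ x w 1)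
      = fun x => C * Real.cos (S * x) := fun _ => rfl
  have e2 : ∀ w : ℝ, (fun x : ℝ => phiRS b₁ b₂ b₃ x w 2)
      = fun x => C * Real.sin (S * x) := fun _ => rfl
  have e3 : ∀ w : ℝ, (fun x : ℝ => phiRS b₁ b₂ b₃ x w 3) = fun _ => b₂ := fun _ => rfl
  have e4 : ∀ w : ℝ, (fun x : ℝ => phiRS b₁ b₂ b₃ x w 4)
      = fun _ => b₃ * Real.sin (w / b₃) := fun _ => rfl
  have e5 : ∀ w : ℝ, (fun x : ℝ => phiRS b₁ b₂ b₃ x w 5)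
      = fun _ => b₃ * Real.cos (w / b₃) := fun _ => rfl
  -- components as functions of v (u fixed at any w)
  have f0 : ∀ w : ℝ, (fun y : ℝ => phiRS b₁ b₂ b₃ w y 0) = fun _ => -b₁ * w := fun _ => rfl
  have f1 : ∀ w : ℝ, (fun y : ℝ => phiRS b₁ b₂ b₃ w y 1)
      = fun _ => C * Real.cos (S * w) := fun _ => rfl
  have f2 : ∀ w : ℝ, (fun y : ℝ => phiRS b₁ b₂ b₃ w y 2)
      = fun _ => C * Real.sin (S * w) := fun _ => rfl
  have f3 : ∀ w : ℝ, (fun y : ℝ => phiRS b₁ b₂ b₃ w y 3) = fun _ => b₂ := fun _ => rfl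
  have f4 : ∀ w : ℝ, (fun y : ℝ => phiRS b₁ b₂ b₃ w y 4)
      = fun y => b₃ * Real.sin (b₃⁻¹ * y) := by
    intro w; funext y; show b₃ * Real.sin (y / b₃) = _; rw [div_eq_inv_mul]
  have f5 : ∀ w : ℝ, (fun y : ℝ => phiRS b₁ b₂ b₃ w y 5)
      = fun y => b₃ * Real.cos (b₃⁻¹ * y) := by
    intro w; funext y; show b₃ * Real.cos (y / b₃) = _; rw [div_eq_inv_mul]
  -- first u-derivatives
  have du0 : ∀ x : ℝ, deriv (fun x : ℝ => phiRS b₁ b₂ b₃ x v 0) x = -b₁ := by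
    intro x; rw [e0 v, deriv_lin]
  have du1 : ∀ x : ℝ, deriv (fun x : ℝ => phiRS b₁ b₂ b₃ x v 1) x
      = -(C * S) * Real.sin (S * x) := by
    intro x; rw [e1 v, deriv_cos_lin]
  have du2 : ∀ x : ℝ, deriv (fun x : ℝ => phiRS b₁ b₂ b₃ x v 2) x
      = (C * S) * Real.cos (S * x) := by
    intro x; rw [e2 v, deriv_sin_lin]
  have du3 : ∀ x : ℝ, deriv (fun x : ℝ => phiRS b₁ b₂ b₃ x v 3) x = 0 := by
    intro x; rw [e3 v]; exact deriv_const x b₂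
  have du4 : ∀ x : ℝ, deriv (fun x : ℝ => phiRS b₁ b₂ b₃ x v 4) x = 0 := by
    intro x; rw [e4 v]; exact deriv_const x _
  have du5 : ∀ x : ℝ, deriv (fun x : ℝ => phiRS b₁ b₂ b₃ x v 5) x = 0 := by
    intro x; rw [e5 v]; exact deriv_const x _
  -- first v-derivatives
  have dv0 : ∀ y : ℝ, deriv (fun y : ℝ => phiRS b₁ b₂ b₃ u y 0) y = 0 := by
    intro y; rw [f0 u]; exact deriv_const y _
  have dv1 : ∀ y : ℝ, deriv (fun y : ℝ => phiRS b₁ b₂ b₃ u y 1) y = 0 := by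
    intro y; rw [f1 u]; exact deriv_const y _
  have dv2 : ∀ y : ℝ, deriv (fun y : ℝ => phiRS b₁ b₂ b₃ u y 2) y = 0 := by
    intro y; rw [f2 u]; exact deriv_const y _
  have dv3 : ∀ y : ℝ, deriv (fun y : ℝ => phiRS b₁ b₂ b₃ u y 3) y = 0 := by
    intro y; rw [f3 u]; exact deriv_const y _
  have dv4 : ∀ y : ℝ, deriv (fun y : ℝ => phiRS b₁ b₂ b₃ u y 4) y
      = (b₃ * b₃⁻¹) * Real.cos (b₃⁻¹ * y) := by
    intro y; rw [f4 u, deriv_sin_lin]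
  have dv5 : ∀ y : ℝ, deriv (fun y : ℝ => phiRS b₁ b₂ b₃ u y 5) y
      = -(b₃ * b₃⁻¹) * Real.sin (b₃⁻¹ * y) := by
    intro y; rw [f5 u, deriv_cos_lin]
  -- Laplacian components
  have lap0 : lapPhiRS b₁ b₂ b₃ u v 0 = 0 := by
    show deriv (fun u' => deriv (fun u'' => phiRS b₁ b₂ b₃ u'' v 0) u') u +
        deriv (fun v' => deriv (fun v'' => phiRS b₁ b₂ b₃ u v'' 0) v') v = 0
    have h1 : (fun u' => deriv (fun u'' => phiRS b₁ b₂ b₃ u'' v 0) u') = fun _ : ℝ => -b₁ := by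
      funext x; exact du0 x
    have h2 : (fun v' => deriv (fun v'' => phiRS b₁ b₂ b₃ u v'' 0) v') = fun _ : ℝ => 0 := by
      funext y; exact dv0 y
    rw [h1, h2, deriv_const, deriv_const]; ring
  have lap1 : lapPhiRS b₁ b₂ b₃ u v 1 = (-(C * S) * S) * Real.cos (S * u) := by
    show deriv (fun u' => deriv (fun u'' => phiRS b₁ b₂ b₃ u'' v 1) u') u +
        deriv (fun v' => deriv (fun v'' => phiRS b₁ b₂ b₃ u v'' 1) v') v = _
    have h1 : (fun u' => deriv (fun u'' => phiRS b₁ b₂ b₃ u'' v 1) u')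
        = fun x : ℝ => -(C * S) * Real.sin (S * x) := by funext x; exact du1 x
    have h2 : (fun v' => deriv (fun v'' => phiRS b₁ b₂ b₃ u v'' 1) v') = fun _ : ℝ => 0 := by
      funext y; exact dv1 y
    rw [h1, h2, deriv_sin_lin, deriv_const]; ring
  have lap2 : lapPhiRS b₁ b₂ b₃ u v 2 = (-(C * S) * S) * Real.sin (S * u) := by
    show deriv (fun u' => deriv (fun u'' => phiRS b₁ b₂ b₃ u'' v 2) u') u +
        deriv (fun v' => deriv (fun v'' => phiRS b₁ b₂ b₃ u v'' 2) v') v = _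
    have h1 : (fun u' => deriv (fun u'' => phiRS b₁ b₂ b₃ u'' v 2) u')
        = fun x : ℝ => (C * S) * Real.cos (S * x) := by funext x; exact du2 x
    have h2 : (fun v' => deriv (fun v'' => phiRS b₁ b₂ b₃ u v'' 2) v') = fun _ : ℝ => 0 := by
      funext y; exact dv2 y
    rw [h1, h2, deriv_cos_lin, deriv_const]; ring
  have lap3 : lapPhiRS b₁ b₂ b₃ u v 3 = 0 := by
    show deriv (fun u' => deriv (fun u'' => phiRS b₁ b₂ b₃ u'' v 3) u') u +
        deriv (fun v' => deriv (fun v'' => phiRS b₁ b₂ b₃ u v'' 3) v') v = 0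
    have h1 : (fun u' => deriv (fun u'' => phiRS b₁ b₂ b₃ u'' v 3) u') = fun _ : ℝ => 0 := by
      funext x; exact du3 x
    have h2 : (fun v' => deriv (fun v'' => phiRS b₁ b₂ b₃ u v'' 3) v') = fun _ : ℝ => 0 := by
      funext y; exact dv3 y
    rw [h1, h2, deriv_const, deriv_const]; ring
  have lap4 : lapPhiRS b₁ b₂ b₃ u v 4
      = (-(b₃ * b₃⁻¹ * b₃⁻¹)) * Real.sin (b₃⁻¹ * v) := by
    show deriv (fun u' => deriv (fun u'' => phiRS b₁ b₂ b₃ u'' v 4) u') u +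
        deriv (fun v' => deriv (fun v'' => phiRS b₁ b₂ b₃ u v'' 4) v') v = _
    have h1 : (fun u' => deriv (fun u'' => phiRS b₁ b₂ b₃ u'' v 4) u') = fun _ : ℝ => 0 := by
      funext x; exact du4 x
    have h2 : (fun v' => deriv (fun v'' => phiRS b₁ b₂ b₃ u v'' 4) v')
        = fun y : ℝ => (b₃ * b₃⁻¹) * Real.cos (b₃⁻¹ * y) := by funext y; exact dv4 y
    rw [h1, h2, deriv_const, deriv_cos_lin]; ring
  have lap5 : lapPhiRS b₁ b₂ b₃ u v 5
      = (-(b₃ * b₃⁻¹ * b₃⁻¹)) * Real.cos (b₃⁻¹ * v) := by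
    show deriv (fun u' => deriv (fun u'' => phiRS b₁ b₂ b₃ u'' v 5) u') u +
        deriv (fun v' => deriv (fun v'' => phiRS b₁ b₂ b₃ u v'' 5) v') v = _
    have h1 : (fun u' => deriv (fun u'' => phiRS b₁ b₂ b₃ u'' v 5) u') = fun _ : ℝ => 0 := by
      funext x; exact du5 x
    have h2 : (fun v' => deriv (fun v'' => phiRS b₁ b₂ b₃ u v'' 5) v')
        = fun y : ℝ => -(b₃ * b₃⁻¹) * Real.sin (b₃⁻¹ * y) := by funext y; exact dv5 y
    rw [h1, h2, deriv_const, deriv_sin_lin]; ring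
  refine ⟨?_, ?_, ?_, lap0⟩
  · -- mixed partials vanish
    intro i
    fin_cases i
    · show deriv (fun u' => deriv (fun v' => phiRS b₁ b₂ b₃ u' v' 0) v) u = 0
      have h : (fun u' => deriv (fun v' => phiRS b₁ b₂ b₃ u' v' 0) v) = fun _ : ℝ => 0 := by
        funext x; rw [f0 x]; exact deriv_const v _
      rw [h]; exact deriv_const u 0
    · show deriv (fun u' => deriv (fun v' => phiRS b₁ b₂ b₃ u' v' 1) v) u = 0
      have h : (fun u' => deriv (fun v' => phiRS b₁ b₂ b₃ u' v' 1) v) = fun _ : ℝ => 0 := by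
        funext x; rw [f1 x]; exact deriv_const v _
      rw [h]; exact deriv_const u 0
    · show deriv (fun u' => deriv (fun v' => phiRS b₁ b₂ b₃ u' v' 2) v) u = 0
      have h : (fun u' => deriv (fun v' => phiRS b₁ b₂ b₃ u' v' 2) v) = fun _ : ℝ => 0 := by
        funext x; rw [f2 x]; exact deriv_const v _
      rw [h]; exact deriv_const u 0
    · show deriv (fun u' => deriv (fun v' => phiRS b₁ b₂ b₃ u' v' 3) v) u = 0
      have h : (fun u' => deriv (fun v' => phiRS b₁ b₂ b₃ u' v' 3) v) = fun _ : ℝ => 0 := by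
        funext x; rw [f3 x]; exact deriv_const v _
      rw [h]; exact deriv_const u 0
    · show deriv (fun u' => deriv (fun v' => phiRS b₁ b₂ b₃ u' v' 4) v) u = 0
      have h : (fun u' => deriv (fun v' => phiRS b₁ b₂ b₃ u' v' 4) v)
          = fun _ : ℝ => (b₃ * b₃⁻¹) * Real.cos (b₃⁻¹ * v) := by
        funext x; rw [f4 x, deriv_sin_lin]
      rw [h]; exact deriv_const u _
    · show deriv (fun u' => deriv (fun v' => phiRS b₁ b₂ b₃ u' v' 5) v) u = 0
      have h : (fun u' => deriv (fun v' => phiRS b₁ b₂ b₃ u' v' 5) v)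
          = fun _ : ℝ => -(b₃ * b₃⁻¹) * Real.sin (b₃⁻¹ * v) := by
        funext x; rw [f5 x, deriv_cos_lin]
      rw [h]; exact deriv_const u _
  · -- ⟨Δφ, φ_u⟩ = 0
    simp only [lorentz6]
    rw [lap0, lap1, lap2, lap3, lap4, lap5, du0 u, du1 u, du2 u, du3 u, du4 u, du5 u]
    ring
  · -- ⟨Δφ, φ_v⟩ = 0
    simp only [lorentz6]
    rw [lap0, lap1, lap2, lap3, lap4, lap5, dv0 v, dv1 v, dv2 v, dv3 v, dv4 v, dv5 v]
    ring
end
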